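/- There exists a type Q having exactly 2 elements, together with a binary operation ▷ on Q satisfying Q2': (x ▷ y) ▷ y = x and Q3: (x ▷ z) ▷ (y ▷ z) = (x ▷ y) ▷ z (but not required to satisfy x ▷ x = x), and elements a1, …, a10 ∈ Q satisfying the culprit relations a1 = a9 ▷ a7, a3 = a1 ▷ a2, a2 = a3 ▷ a4, a5 = a2 ▷ a10, a6 = a5 ▷ a4, a7 = a6 ▷ a1, a8 = a7 ▷ a4, a10 = a8 ▷ a9, a4 = a10 ▷ a3, a9 = a4 ▷ a8, such that not all of a1, …, a10 are equal. (A witness is ZMod 2 with x ▷ y := x + 1.) This shows the culprit diagram cannot be untangled using only Reidemeister moves of types II and III. -/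
import Mathlib

theorem culprit_needs_RM1 :
    ∃ (Q : Type) (op : Q → Q → Q), Nat.card Q = 2 ∧
      (∀ x y : Q, op (op x y) y = x) ∧
      (∀ x y z : Q, op (op x z) (op y z) = op (op x y) z) ∧
      ∃ a1 a2 a3 a4 a5 a6 a7 a8 a9 a10 : Q,
        a1 = op a9 a7 ∧ a3 = op a1 a2 ∧ a2 = op a3 a4 ∧ a5 = op a2 a10 ∧
        a6 = op a5 a4 ∧ a7 = op a6 a1 ∧ a8 = op a7 a4 ∧ a10 = op a8 a9 ∧
        a4 = op a10 a3 ∧ a9 = op a4 a8 ∧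
        ¬(a1 = a2 ∧ a2 = a3 ∧ a3 = a4 ∧ a4 = a5 ∧ a5 = a6 ∧ a6 = a7 ∧
          a7 = a8 ∧ a8 = a9 ∧ a9 = a10) := by
  refine ⟨ZMod 2, fun x _ => x + 1, ?_, ?_, ?_,
    1, 1, 0, 1, 0, 1, 0, 1, 0, 0, ?_, ?_, ?_, ?_, ?_, ?_, ?_, ?_, ?_, ?_, ?_⟩ <;>
    first | exact Nat.card_zmod 2 | decide | (intros; ring)
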